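/- Let φ : R → Q be an injective ring epimorphism with Q flat as a left R-module, K = Q/φ(R). Then for every torsion right R-module M (i.e., M ⊗_R Q = 0), the canonical map π : Hom_R(K, M) ⊗_R K → h(M) defined by π(f ⊗ x) = f(x) is a surjective homomorphism of right R-modules, where h(M) is the largest h-divisible submodule of M. -/

import Mathlib

open MulOpposite

universe u

/-- `φ : R →+* Q` is an epimorphism in the category of rings. -/
def IsRingEpi {R Q : Type u} [Ring R] [Ring Q] (φ : R →+* Q) : Prop :=
  ∀ (T : Type u) [Ring T] (ψ ω : Q →+* T), ψ.comp φ = ω.comp φ → ψ = ω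

section NCTensor

variable (R : Type u) [Ring R] (M : Type u) [AddCommGroup M] [Module Rᵐᵒᵖ M]
  (N : Type u) [AddCommGroup N] [Module R N]

/-- Relations defining the tensor product `M ⊗_R N` of a right `R`-module `M`
and a left `R`-module `N` over a (possibly noncommutative) ring `R`. -/
def ncRels : AddSubgroup (FreeAbelianGroup (M × N)) :=
  AddSubgroup.closure
    ({x | ∃ m m' n, x = FreeAbelianGroup.of (m + m', n) - FreeAbelianGroup.of (m, n) -
        FreeAbelianGroup.of (m', n)} ∪
     {x | ∃ m n n', x = FreeAbelianGroup.of (m, n + n') - FreeAbelianGroup.of (m, n) -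
        FreeAbelianGroup.of (m, n')} ∪
     {x | ∃ (r : R) (m : M) (n : N), x = FreeAbelianGroup.of (op r • m, n) -
        FreeAbelianGroup.of (m, r • n)})

/-- The tensor product `M ⊗_R N` of a right `R`-module and a left `R`-module over a
(possibly noncommutative) ring `R`, as an abelian group. -/
def NCTensor : Type u := FreeAbelianGroup (M × N) ⧸ ncRels R M N

instance : AddCommGroup (NCTensor R M N) :=
  QuotientAddGroup.Quotient.addCommGroup _

/-- The pure tensor `m ⊗ n` in `M ⊗_R N`. -/
def NCTensor.tmul (m : M) (n : N) : NCTensor R M N :=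
  QuotientAddGroup.mk (FreeAbelianGroup.of (m, n))

end NCTensor

/-- A left `R`-module `N` is flat if tensoring right `R`-modules with `N`
preserves injectivity. -/
def IsFlatLeftModule (R : Type u) [Ring R] (N : Type u) [AddCommGroup N] [Module R N] : Prop :=
  ∀ (A B : Type u) [AddCommGroup A] [AddCommGroup B] [Module Rᵐᵒᵖ A] [Module Rᵐᵒᵖ B]
    (i : A →ₗ[Rᵐᵒᵖ] B), Function.Injective i →
    ∀ g : NCTensor R A N →+ NCTensor R B N,
      (∀ a n, g (NCTensor.tmul R A N a n) = NCTensor.tmul R B N (i a) n) →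
      Function.Injective g

section Kmod

variable {R Q : Type u} [Ring R] [Ring Q] (φ : R →+* Q) [Module Rᵐᵒᵖ Q]
  (hr : ∀ (r : R) (q : Q), op r • q = q * φ r)

/-- The image of `φ`, as a submodule of the right `R`-module `Q`. -/
def phiRange : Submodule Rᵐᵒᵖ Q where
  carrier := Set.range φ
  add_mem' := by rintro x y ⟨a, rfl⟩ ⟨b, rfl⟩; exact ⟨a + b, map_add φ a b⟩
  zero_mem' := ⟨0, map_zero φ⟩
  smul_mem' := by
    rintro c x ⟨a, rfl⟩
    refine ⟨a * c.unop, ?_⟩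
    rw [map_mul]
    conv_rhs => rw [← MulOpposite.op_unop c, hr]

/-- `K = Q/φ(R)` as a right `R`-module. -/
abbrev Kmod := Q ⧸ phiRange φ hr

end Kmod

section Kleft

variable {R Q : Type u} [Ring R] [Ring Q] (φ : R →+* Q) [Module Rᵐᵒᵖ Q]
  (hr : ∀ (r : R) (q : Q), op r • q = q * φ r)

/-- Left multiplication by `φ r` on `Q`, as an endomorphism of the right `R`-module `Q`. -/
def lmulQ (r : R) : Q →ₗ[Rᵐᵒᵖ] Q where
  toFun q := φ r * q
  map_add' := mul_add _
  map_smul' := by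
    intro c q
    simp only [RingHom.id_apply]
    conv_lhs => rw [← MulOpposite.op_unop c, hr]
    conv_rhs => rw [← MulOpposite.op_unop c, hr]
    rw [mul_assoc]

/-- Left multiplication by `φ r` on `K = Q/φ(R)`. -/
def lK (r : R) : Kmod φ hr →ₗ[Rᵐᵒᵖ] Kmod φ hr :=
  Submodule.mapQ _ _ (lmulQ φ hr r) (by
    rintro x ⟨a, rfl⟩
    exact ⟨r * a, by simp [lmulQ, map_mul]⟩)

/-- The left `R`-module structure on `K = Q/φ(R)` induced by left multiplication. -/
def KleftModule : Module R (Kmod φ hr) :=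
  letI : SMul R (Kmod φ hr) := ⟨fun r k => lK φ hr r k⟩
  Module.ofMinimalAxioms
    (fun r x y => map_add (lK φ hr r) x y)
    (fun r s x => by
      obtain ⟨q, rfl⟩ := Submodule.Quotient.mk_surjective _ x
      show lK φ hr (r + s) (Submodule.Quotient.mk q) = _
      simp only [lK, Submodule.mapQ_apply, lmulQ, LinearMap.coe_mk, AddHom.coe_mk, map_add,
        add_mul]
      rfl)
    (fun r s x => by
      obtain ⟨q, rfl⟩ := Submodule.Quotient.mk_surjective _ x
      show lK φ hr (r * s) (Submodule.Quotient.mk q) = lK φ hr r (lK φ hr s _)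
      simp only [lK, Submodule.mapQ_apply, lmulQ, LinearMap.coe_mk, AddHom.coe_mk, map_mul,
        mul_assoc])
    (fun x => by
      obtain ⟨q, rfl⟩ := Submodule.Quotient.mk_surjective _ x
      show lK φ hr 1 (Submodule.Quotient.mk q) = _
      simp [lK, Submodule.mapQ_apply, lmulQ])

end Kleft

section HomMod

variable {R Q : Type u} [Ring R] [Ring Q] (φ : R →+* Q) [Module Rᵐᵒᵖ Q]
  (hr : ∀ (r : R) (q : Q), op r • q = q * φ r)
  (M : Type u) [AddCommGroup M] [Module Rᵐᵒᵖ M]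

/-- The right `R`-module structure on `Hom_R(K, M)` coming from the left action of `R` on `K`. -/
def homModule : Module Rᵐᵒᵖ (Kmod φ hr →ₗ[Rᵐᵒᵖ] M) :=
  letI : SMul Rᵐᵒᵖ (Kmod φ hr →ₗ[Rᵐᵒᵖ] M) := ⟨fun c f => f.comp (lK φ hr c.unop)⟩
  Module.ofMinimalAxioms
    (fun c f g => by
      refine LinearMap.ext fun k => ?_
      rfl)
    (fun c d f => by
      show f.comp (lK φ hr (c + d).unop) = f.comp (lK φ hr c.unop) + f.comp (lK φ hr d.unop)
      refine LinearMap.ext fun k => ?_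
      obtain ⟨q, rfl⟩ := Submodule.Quotient.mk_surjective _ k
      simp [lK, Submodule.mapQ_apply, lmulQ, MulOpposite.unop_add, map_add, add_mul])
    (fun c d f => by
      show f.comp (lK φ hr (c * d).unop) = (f.comp (lK φ hr d.unop)).comp (lK φ hr c.unop)
      refine LinearMap.ext fun k => ?_
      obtain ⟨q, rfl⟩ := Submodule.Quotient.mk_surjective _ k
      simp [lK, Submodule.mapQ_apply, lmulQ, map_mul, mul_assoc])
    (fun f => by
      show f.comp (lK φ hr (1 : Rᵐᵒᵖ).unop) = f
      refine LinearMap.ext fun k => ?_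
      obtain ⟨q, rfl⟩ := Submodule.Quotient.mk_surjective _ k
      simp [lK, Submodule.mapQ_apply, lmulQ])

end HomMod


section NCLiftAux

variable (R : Type u) [Ring R] (A : Type u) [AddCommGroup A] [Module Rᵐᵒᵖ A]
  (N : Type u) [AddCommGroup N] [Module R N]

variable {T : Type u} [AddCommGroup T]

/-- Lifting a balanced biadditive map to the tensor product. -/
def NCTensor.lift (b : A × N → T)
    (h1 : ∀ a a' n, b (a + a', n) = b (a, n) + b (a', n))
    (h2 : ∀ a n n', b (a, n + n') = b (a, n) + b (a, n'))
    (h3 : ∀ (r : R) (a : A) (n : N), b (op r • a, n) = b (a, r • n)) :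
    NCTensor R A N →+ T :=
  QuotientAddGroup.lift _ (FreeAbelianGroup.lift b) (by
    rw [ncRels, AddSubgroup.closure_le]
    rintro x ((⟨a, a', n, rfl⟩ | ⟨a, n, n', rfl⟩) | ⟨r, a, n, rfl⟩) <;>
      simp only [SetLike.mem_coe, AddMonoidHom.mem_ker, map_sub, FreeAbelianGroup.lift_apply_of,
        h1, h2, h3] <;> abel)

theorem NCTensor.lift_tmul (b : A × N → T) (h1) (h2) (h3) (a : A) (n : N) :
    NCTensor.lift R A N b h1 h2 h3 (NCTensor.tmul R A N a n) = b (a, n) := by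
  show QuotientAddGroup.lift _ _ _ (QuotientAddGroup.mk _) = _
  rw [QuotientAddGroup.lift_mk, FreeAbelianGroup.lift_apply_of]

theorem NCTensor.tmul_add_left (a a' : A) (n : N) :
    NCTensor.tmul R A N (a + a') n = NCTensor.tmul R A N a n + NCTensor.tmul R A N a' n := by
  have h : FreeAbelianGroup.of (a + a', n) - FreeAbelianGroup.of (a, n) -
      FreeAbelianGroup.of (a', n) ∈ ncRels R A N :=
    AddSubgroup.subset_closure (Or.inl (Or.inl ⟨a, a', n, rfl⟩))
  have h2 := (QuotientAddGroup.eq_zero_iff _).2 h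
  rw [QuotientAddGroup.mk_sub, QuotientAddGroup.mk_sub, sub_sub, sub_eq_zero] at h2
  exact h2

theorem NCTensor.tmul_add_right (a : A) (n n' : N) :
    NCTensor.tmul R A N a (n + n') = NCTensor.tmul R A N a n + NCTensor.tmul R A N a n' := by
  have h : FreeAbelianGroup.of (a, n + n') - FreeAbelianGroup.of (a, n) -
      FreeAbelianGroup.of (a, n') ∈ ncRels R A N :=
    AddSubgroup.subset_closure (Or.inl (Or.inr ⟨a, n, n', rfl⟩))
  have h2 := (QuotientAddGroup.eq_zero_iff _).2 h
  rw [QuotientAddGroup.mk_sub, QuotientAddGroup.mk_sub, sub_sub, sub_eq_zero] at h2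
  exact h2

theorem NCTensor.tmul_smul' (r : R) (a : A) (n : N) :
    NCTensor.tmul R A N (op r • a) n = NCTensor.tmul R A N a (r • n) := by
  have h : FreeAbelianGroup.of (op r • a, n) - FreeAbelianGroup.of (a, r • n) ∈ ncRels R A N :=
    AddSubgroup.subset_closure (Or.inr ⟨r, a, n, rfl⟩)
  have h2 := (QuotientAddGroup.eq_zero_iff _).2 h
  rw [QuotientAddGroup.mk_sub, sub_eq_zero] at h2
  exact h2

end NCLiftAux

section AnnAux

variable (R : Type u) [Ring R] (M : Type u) [AddCommGroup M] [Module Rᵐᵒᵖ M] (m : M)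

/-- The annihilator of `m` as a right submodule of `R`. -/
def annSub : Submodule Rᵐᵒᵖ R where
  carrier := {r | op r • m = 0}
  zero_mem' := by simp only [Set.mem_setOf_eq, op_zero, zero_smul]
  add_mem' := by
    intro a b ha hb
    simp only [Set.mem_setOf_eq] at *
    rw [op_add, add_smul, ha, hb, add_zero]
  smul_mem' := by
    intro c r hrm
    simp only [Set.mem_setOf_eq] at *
    have hcr : c • r = r * c.unop := rfl
    rw [hcr, op_mul, op_unop, mul_smul, hrm, smul_zero]

theorem mem_annSub {r : R} : r ∈ annSub R M m ↔ op r • m = 0 := Iff.rfl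

/-- The map `R/ann(m) → M`, `r ↦ m·r`. -/
def iotaMap : (R ⧸ annSub R M m) →ₗ[Rᵐᵒᵖ] M :=
  Submodule.liftQ _
    { toFun := fun r => op r • m
      map_add' := fun a b => by rw [op_add, add_smul]
      map_smul' := fun c r => by
        have hcr : c • r = r * c.unop := rfl
        simp only [RingHom.id_apply]
        rw [hcr, op_mul, op_unop, mul_smul] }
    (fun r hrm => hrm)

theorem iotaMap_mk (a : R) : iotaMap R M m (Submodule.Quotient.mk a) = op a • m := rfl

theorem iotaMap_inj : Function.Injective (iotaMap R M m) := by
  intro x y hxy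
  obtain ⟨a, rfl⟩ := Submodule.Quotient.mk_surjective _ x
  obtain ⟨b, rfl⟩ := Submodule.Quotient.mk_surjective _ y
  have h : op a • m = op b • m := hxy
  rw [Submodule.Quotient.eq]
  show op (a - b) • m = 0
  rw [op_sub, sub_smul, h, sub_self]

noncomputable def repA (c : R ⧸ annSub R M m) : R :=
  (Submodule.Quotient.mk_surjective _ c).choose

theorem repA_spec (c : R ⧸ annSub R M m) :
    (Submodule.Quotient.mk (repA R M m c) : R ⧸ annSub R M m) = c :=
  (Submodule.Quotient.mk_surjective _ c).choose_spec

end AnnAux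

section AuxTorsion

variable {R Q : Type u} [Ring R] [Ring Q] (φ : R →+* Q) [Module Rᵐᵒᵖ Q]
  [Module R Q] (hl : ∀ (r : R) (q : Q), r • q = φ r * q)
  (M : Type u) [AddCommGroup M] [Module Rᵐᵒᵖ M] (m : M)

/-- The right ideal `φ(ann(m))·Q` of `Q` as an additive subgroup. -/
def Jgrp : AddSubgroup Q :=
  AddSubgroup.closure {x | ∃ i u, op i • m = 0 ∧ x = φ i * u}

theorem repA_mk (a : R) (u : Q) :
    (QuotientAddGroup.mk (φ (repA R M m (Submodule.Quotient.mk a)) * u) : Q ⧸ Jgrp φ M m) =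
      QuotientAddGroup.mk (φ a * u) := by
  have hmem : repA R M m (Submodule.Quotient.mk a) - a ∈ annSub R M m := by
    rw [← Submodule.Quotient.eq]
    exact repA_spec R M m _
  have hgen : φ (repA R M m (Submodule.Quotient.mk a) - a) * u ∈ Jgrp φ M m :=
    AddSubgroup.subset_closure ⟨_, u, hmem, rfl⟩
  rw [QuotientAddGroup.eq]
  have heq : -(φ (repA R M m (Submodule.Quotient.mk a)) * u) + φ a * u =
      -(φ (repA R M m (Submodule.Quotient.mk a) - a) * u) := by
    rw [map_sub, sub_mul]; abel
  rw [heq]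
  exact AddSubgroup.neg_mem _ hgen

/-- The map `(R/ann(m)) ⊗ Q → Q/J`. -/
noncomputable def betaMap : NCTensor R (R ⧸ annSub R M m) Q →+ Q ⧸ Jgrp φ M m :=
  NCTensor.lift R (R ⧸ annSub R M m) Q
    (fun p => QuotientAddGroup.mk (φ (repA R M m p.1) * p.2))
    (by
      intro a a' n
      obtain ⟨x, rfl⟩ := Submodule.Quotient.mk_surjective _ a
      obtain ⟨y, rfl⟩ := Submodule.Quotient.mk_surjective _ a'
      dsimp only
      rw [← Submodule.Quotient.mk_add, repA_mk, repA_mk, repA_mk, map_add, add_mul,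
        QuotientAddGroup.mk_add])
    (by
      intro a n n'
      dsimp only
      simp only [mul_add, QuotientAddGroup.mk_add])
    (by
      intro r a n
      obtain ⟨x, rfl⟩ := Submodule.Quotient.mk_surjective _ a
      have h1 : op r • (Submodule.Quotient.mk x : R ⧸ annSub R M m) =
          Submodule.Quotient.mk (x * r) := by
        rw [← Submodule.Quotient.mk_smul, op_smul_eq_mul]
      dsimp only
      rw [h1, repA_mk, repA_mk, hl, map_mul, mul_assoc])

theorem betaMap_tmul (c : R ⧸ annSub R M m) (u : Q) :
    betaMap φ hl M m (NCTensor.tmul R (R ⧸ annSub R M m) Q c u) =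
      QuotientAddGroup.mk (φ (repA R M m c) * u) :=
  NCTensor.lift_tmul _ _ _ _ _ _ _ _ _

end AuxTorsion

section Fi

variable {R Q : Type u} [Ring R] [Ring Q] (φ : R →+* Q) [Module Rᵐᵒᵖ Q]
  (hr : ∀ (r : R) (q : Q), op r • q = q * φ r)
  (M : Type u) [AddCommGroup M] [Module Rᵐᵒᵖ M]

/-- For `g : Q → M` and `i` annihilating `g 1`, the map `K → M`, `δ(q) ↦ g(φ(i)·q)`. -/
def fiMap (g : Q →ₗ[Rᵐᵒᵖ] M) (i : R) (hi : op i • g 1 = 0) :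
    Kmod φ hr →ₗ[Rᵐᵒᵖ] M :=
  Submodule.liftQ _
    { toFun := fun q => g (φ i * q)
      map_add' := fun a b => by rw [mul_add, map_add]
      map_smul' := fun c q => by
        rw [← op_unop c, hr, ← mul_assoc, ← hr, map_smul]
        rfl }
    (by
      rintro x ⟨a, rfl⟩
      show g (φ i * φ a) = 0
      have h1 : φ i * φ a = op (i * a) • (1 : Q) := by rw [hr, one_mul, map_mul]
      rw [h1, map_smul, op_mul, mul_smul, hi, smul_zero])

theorem fiMap_mk (g : Q →ₗ[Rᵐᵒᵖ] M) (i : R) (hi : op i • g 1 = 0) (q : Q) :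
    fiMap φ hr M g i hi (Submodule.Quotient.mk q) = g (φ i * q) := rfl

end Fi

theorem lift_h3_aux {R Q : Type u} [Ring R] [Ring Q] (φ : R →+* Q) [Module Rᵐᵒᵖ Q]
    (hr : ∀ (r : R) (q : Q), op r • q = q * φ r)
    (M : Type u) [AddCommGroup M] [Module Rᵐᵒᵖ M] :
    letI : Module R (Kmod φ hr) := KleftModule φ hr
    letI : Module Rᵐᵒᵖ (Kmod φ hr →ₗ[Rᵐᵒᵖ] M) := homModule φ hr M
    ∀ (r : R) (a : Kmod φ hr →ₗ[Rᵐᵒᵖ] M) (n : Kmod φ hr), (op r • a) n = a (r • n) :=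
  fun _ _ _ => rfl

/-- If `φ : R → Q` is an injective ring epimorphism with `Q` flat as a left `R`-module and
`K = Q/φ(R)`, then for every torsion right `R`-module `M` the canonical map
`π : Hom_R(K, M) ⊗_R K → h(M)`, `f ⊗ x ↦ f x`, is a surjective right `R`-module
homomorphism onto the largest h-divisible submodule `h(M)` of `M`. -/
theorem canonical_map_onto_hM {R Q : Type u} [Ring R] [Ring Q] (φ : R →+* Q)
    (hinj : Function.Injective φ) (hepi : IsRingEpi φ)
    [Module Rᵐᵒᵖ Q] (hr : ∀ (r : R) (q : Q), op r • q = q * φ r)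
    [Module R Q] (hl : ∀ (r : R) (q : Q), r • q = φ r * q)
    (hflat : IsFlatLeftModule R Q)
    (M : Type u) [AddCommGroup M] [Module Rᵐᵒᵖ M]
    (htors : Subsingleton (NCTensor R M Q)) :
    letI : Module R (Kmod φ hr) := KleftModule φ hr
    letI : Module Rᵐᵒᵖ (Kmod φ hr →ₗ[Rᵐᵒᵖ] M) := homModule φ hr M
    ∃ π : NCTensor R (Kmod φ hr →ₗ[Rᵐᵒᵖ] M) (Kmod φ hr) →+ M,
      (∀ (f : Kmod φ hr →ₗ[Rᵐᵒᵖ] M) (x : Kmod φ hr),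
        π (NCTensor.tmul R (Kmod φ hr →ₗ[Rᵐᵒᵖ] M) (Kmod φ hr) f x) = f x) ∧
      (∀ (f : Kmod φ hr →ₗ[Rᵐᵒᵖ] M) (x : Kmod φ hr) (r : R),
        π (NCTensor.tmul R (Kmod φ hr →ₗ[Rᵐᵒᵖ] M) (Kmod φ hr) f ((op r : Rᵐᵒᵖ) • x)) =
          (op r : Rᵐᵒᵖ) • π (NCTensor.tmul R (Kmod φ hr →ₗ[Rᵐᵒᵖ] M) (Kmod φ hr) f x)) ∧
      Set.range π = {m : M | ∃ g : Q →ₗ[Rᵐᵒᵖ] M, g 1 = m} := by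
  letI : Module R (Kmod φ hr) := KleftModule φ hr
  letI : Module Rᵐᵒᵖ (Kmod φ hr →ₗ[Rᵐᵒᵖ] M) := homModule φ hr M
  refine ⟨NCTensor.lift R (Kmod φ hr →ₗ[Rᵐᵒᵖ] M) (Kmod φ hr) (fun p => p.1 p.2)
      (fun a a' n => rfl) (fun a n n' => map_add a n n') (lift_h3_aux φ hr M),
    fun f x => NCTensor.lift_tmul _ _ _ _ _ _ _ _ _, fun f x r => ?_, ?_⟩
  · rw [NCTensor.lift_tmul, NCTensor.lift_tmul]
    exact map_smul f (op r) x
  · ext m0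
    simp only [Set.mem_range, Set.mem_setOf_eq]
    constructor
    · rintro ⟨z, rfl⟩
      obtain ⟨w, rfl⟩ := QuotientAddGroup.mk_surjective z
      refine FreeAbelianGroup.induction_on w ?_ ?_ ?_ ?_
      · exact ⟨0, by simp; exact (map_zero _).symm⟩
      · rintro ⟨f, x⟩
        obtain ⟨q, rfl⟩ := Submodule.Quotient.mk_surjective _ x
        refine ⟨{ toFun := fun p => f (Submodule.Quotient.mk (q * p))
                  map_add' := fun a b => by
                    rw [mul_add, Submodule.Quotient.mk_add, map_add]
                  map_smul' := fun c p => by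
                    rw [← op_unop c, hr, ← mul_assoc, ← hr, Submodule.Quotient.mk_smul, map_smul]
                    rfl }, ?_⟩
        show f (Submodule.Quotient.mk (q * 1)) = _
        rw [mul_one]
        exact (NCTensor.lift_tmul R (Kmod φ hr →ₗ[Rᵐᵒᵖ] M) (Kmod φ hr) (fun p => p.1 p.2)
          (fun a a' n => rfl) (fun a n n' => map_add a n n') (lift_h3_aux φ hr M) f
          (Submodule.Quotient.mk q)).symm
      · rintro x ⟨g0, hg0⟩
        refine ⟨-g0, ?_⟩
        rw [LinearMap.neg_apply, hg0]
        exact (map_neg _ _).symm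
      · rintro x y ⟨g1, hg1⟩ ⟨g2, hg2⟩
        refine ⟨g1 + g2, ?_⟩
        rw [LinearMap.add_apply, hg1, hg2]
        exact (map_add _ _ _).symm
    · rintro ⟨g, rfl⟩
      have h1' : ∀ (a a' : R ⧸ annSub R M (g 1)) (n : Q),
          NCTensor.tmul R M Q (iotaMap R M (g 1) (a + a')) n =
            NCTensor.tmul R M Q (iotaMap R M (g 1) a) n +
              NCTensor.tmul R M Q (iotaMap R M (g 1) a') n := fun a a' n => by
        rw [map_add, NCTensor.tmul_add_left]
      have h2' : ∀ (a : R ⧸ annSub R M (g 1)) (n n' : Q),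
          NCTensor.tmul R M Q (iotaMap R M (g 1) a) (n + n') =
            NCTensor.tmul R M Q (iotaMap R M (g 1) a) n +
              NCTensor.tmul R M Q (iotaMap R M (g 1) a) n' := fun a n n' => by
        rw [NCTensor.tmul_add_right]
      have h3' : ∀ (r : R) (a : R ⧸ annSub R M (g 1)) (n : Q),
          NCTensor.tmul R M Q (iotaMap R M (g 1) (op r • a)) n =
            NCTensor.tmul R M Q (iotaMap R M (g 1) a) (r • n) := fun r a n => by
        rw [map_smul, NCTensor.tmul_smul']
      have hinj2 : Function.Injective
          (NCTensor.lift R (R ⧸ annSub R M (g 1)) Q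
            (fun p => NCTensor.tmul R M Q (iotaMap R M (g 1) p.1) p.2)
            (fun a a' n => h1' a a' n) (fun a n n' => h2' a n n')
            (fun r a n => h3' r a n)) :=
        hflat _ M (iotaMap R M (g 1)) (iotaMap_inj R M (g 1)) _
          (fun a n => NCTensor.lift_tmul _ _ _ _ _ _ _ _ _)
      haveI hsub : Subsingleton (NCTensor R (R ⧸ annSub R M (g 1)) Q) :=
        ⟨fun a b => hinj2 (Subsingleton.elim _ _)⟩
      have h1J : (1 : Q) ∈ Jgrp φ M (g 1) := by
        have h0 : betaMap φ hl M (g 1)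
            (NCTensor.tmul R (R ⧸ annSub R M (g 1)) Q (Submodule.Quotient.mk 1) 1) = 0 := by
          rw [Subsingleton.elim
            (NCTensor.tmul R (R ⧸ annSub R M (g 1)) Q (Submodule.Quotient.mk 1) 1) 0, map_zero]
        rw [betaMap_tmul, repA_mk, show φ (1 : R) * (1 : Q) = 1 by
          rw [φ.map_one, one_mul]] at h0
        exact (QuotientAddGroup.eq_zero_iff _).1 h0
      have hle : Jgrp φ M (g 1) ≤ AddSubgroup.comap g.toAddMonoidHom
          (NCTensor.lift R (Kmod φ hr →ₗ[Rᵐᵒᵖ] M) (Kmod φ hr) (fun p => p.1 p.2)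
            (fun a a' n => rfl) (fun a n n' => map_add a n n') (lift_h3_aux φ hr M)).range := by
        rw [Jgrp, AddSubgroup.closure_le]
        rintro x ⟨i, u, hi, rfl⟩
        refine AddSubgroup.mem_comap.2 ?_
        refine ⟨NCTensor.tmul R (Kmod φ hr →ₗ[Rᵐᵒᵖ] M) (Kmod φ hr)
          (fiMap φ hr M g i hi) (Submodule.Quotient.mk u), ?_⟩
        exact NCTensor.lift_tmul _ _ _ _ _ _ _ _ _
      obtain ⟨z, hz⟩ := AddSubgroup.mem_comap.1 (hle h1J)
      exact ⟨z, hz⟩
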